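/- Let c ⊆ J ⊂ S be homogeneous ideals with S/c Cohen–Macaulay, J unmixed, codim J = codim c + 1, and let x ∈ S be a linear form that is a nonzerodivisor on S/c and on S/J. Then (xJ + c) : x = J. -/

import Mathlib

set_option synthInstance.maxHeartbeats 1000000
set_option maxHeartbeats 1000000
open MvPolynomial

/-- An abstract simplicial complex on the vertex set `Fin n`. -/
structure SComplex (n : ℕ) where
  faces : Set (Finset (Fin n))
  down_closed : ∀ {F G : Finset (Fin n)}, G ∈ faces → F ⊆ G → F ∈ faces

namespace SComplex

variable {n : ℕ}

/-- The link of a vertex `k`. -/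
def link (Δ : SComplex n) (k : Fin n) : SComplex n where
  faces := {G | k ∉ G ∧ G ∈ Δ.faces ∧ insert k G ∈ Δ.faces}
  down_closed := by
    intro F G hG hFG
    exact ⟨fun h => hG.1 (hFG h), Δ.down_closed hG.2.1 hFG,
      Δ.down_closed hG.2.2 (Finset.insert_subset_insert k hFG)⟩

/-- The deletion of a vertex `k`. -/
def del (Δ : SComplex n) (k : Fin n) : SComplex n where
  faces := {G | G ∈ Δ.faces ∧ k ∉ G}
  down_closed := by
    intro F G hG hFG
    exact ⟨Δ.down_closed hG.1 hFG, fun h => hG.2 (hFG h)⟩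

/-- `Δ` is a cone with apex `k`. -/
def IsCone (Δ : SComplex n) (k : Fin n) : Prop :=
  ∀ F ∈ Δ.faces, insert k F ∈ Δ.faces

def IsFacet (Δ : SComplex n) (G : Finset (Fin n)) : Prop :=
  G ∈ Δ.faces ∧ ∀ H ∈ Δ.faces, G ⊆ H → H = G

/-- A complex is pure if all facets have the same cardinality. -/
def Pure (Δ : SComplex n) : Prop :=
  ∀ G H : Finset (Fin n), Δ.IsFacet G → Δ.IsFacet H → G.card = H.card

/-- One more than the dimension of `Δ`: the largest cardinality of a face. -/
noncomputable def dimSucc (Δ : SComplex n) : ℕ :=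
  sSup {d | ∃ F ∈ Δ.faces, F.card = d}

/-- `Δ` is a (possibly empty) simplex: its faces are all subsets of a fixed set. -/
def IsSimplex (Δ : SComplex n) : Prop :=
  ∃ F : Finset (Fin n), Δ.faces = {G | G ⊆ F}

/-- Restriction of `Δ` to a subset `W` of the vertices. -/
def restriction (Δ : SComplex n) (W : Finset (Fin n)) : SComplex n where
  faces := {F | F ∈ Δ.faces ∧ F ⊆ W}
  down_closed := by
    intro F G hG hFG
    exact ⟨Δ.down_closed hG.1 hFG, hFG.trans hG.2⟩

/-- A matroid complex: every restriction is pure. -/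
def IsMatroid (Δ : SComplex n) : Prop :=
  ∀ W : Finset (Fin n), (Δ.restriction W).Pure

/-- A shifted complex. -/
def IsShifted (Δ : SComplex n) : Prop :=
  ∀ F ∈ Δ.faces, ∀ j ∈ F, ∀ i : Fin n, j < i → i ∉ F →
    insert i (F.erase j) ∈ Δ.faces

/-- Vertex-decomposability of a (pure) simplicial complex. -/
inductive VertexDecomposable : SComplex n → Prop
  | simplex (Δ : SComplex n) : Δ.IsSimplex → VertexDecomposable Δ
  | singleton (Δ : SComplex n) : Δ.faces = {∅} → VertexDecomposable Δ
  | step (Δ : SComplex n) (k : Fin n) :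
      (Δ.link k).Pure → (Δ.del k).Pure →
      VertexDecomposable (Δ.link k) → VertexDecomposable (Δ.del k) →
      Δ.dimSucc = (Δ.del k).dimSucc → Δ.dimSucc = (Δ.link k).dimSucc + 1 →
      VertexDecomposable Δ

/-- The cone over `Δ` with a new apex `Fin.last n`. -/
def coneC (Δ : SComplex n) : SComplex (n + 1) where
  faces := {G | ∃ F ∈ Δ.faces, G ⊆ insert (Fin.last n) (F.image Fin.castSucc)}
  down_closed := by
    rintro F G ⟨F', hF', hsub⟩ hFG
    exact ⟨F', hF', hFG.trans hsub⟩

end SComplex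

section Algebra

variable (K : Type*) [Field K] {n : ℕ}

/-- The squarefree monomial `x_F = ∏_{i ∈ F} x_i`. -/
noncomputable def xF (F : Finset (Fin n)) : MvPolynomial (Fin n) K := ∏ i ∈ F, X i

/-- The Stanley–Reisner ideal of `Δ`. -/
noncomputable def SRIdeal (Δ : SComplex n) : Ideal (MvPolynomial (Fin n) K) :=
  Ideal.span {p | ∃ F : Finset (Fin n), F ∉ Δ.faces ∧ p = xF K F}

/-- The ideal `(x_F : F ⊆ [n] \ {k}, F ∉ Γ)`, i.e. the Stanley–Reisner ideal of the
cone with apex `k` over the subcomplex `Γ`. -/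
noncomputable def coneIdeal (Γ : SComplex n) (k : Fin n) : Ideal (MvPolynomial (Fin n) K) :=
  Ideal.span {p | ∃ F : Finset (Fin n), k ∉ F ∧ F ∉ Γ.faces ∧ p = xF K F}

/-- The depth of `S/I`: the maximal length of a regular sequence on `S/I` consisting of
elements of the irrelevant maximal ideal (elements with zero constant term). -/
noncomputable def quotDepth (I : Ideal (MvPolynomial (Fin n) K)) : ℕ :=
  sSup {d | ∃ rs : List (MvPolynomial (Fin n) K), rs.length = d ∧
    (∀ p ∈ rs, constantCoeff p = 0) ∧
    RingTheory.Sequence.IsRegular (MvPolynomial (Fin n) K ⧸ I)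
      (rs.map (Ideal.Quotient.mk I))}

/-- `S/I` is a Cohen–Macaulay ring: its depth equals its Krull dimension. -/
def IsCMQuot (I : Ideal (MvPolynomial (Fin n) K)) : Prop :=
  (quotDepth K I : WithBot ℕ∞) = ringKrullDim (MvPolynomial (Fin n) K ⧸ I)

/-- The height (codimension) of an ideal. -/
noncomputable def idealHeight (I : Ideal (MvPolynomial (Fin n) K)) : ℕ∞ :=
  ⨅ (P : PrimeSpectrum (MvPolynomial (Fin n) K)) (_ : I ≤ P.asIdeal), Order.height P

/-- `I` is unmixed: all associated primes of `S/I` have the same height, that of `I`. -/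
def UnmixedIdeal (I : Ideal (MvPolynomial (Fin n) K)) : Prop :=
  ∀ P ∈ associatedPrimes (MvPolynomial (Fin n) K) (MvPolynomial (Fin n) K ⧸ I),
    idealHeight K P = idealHeight K I

/-- The simplicial complex `Δ` is Cohen–Macaulay over `K`. -/
def IsCMComplex (Δ : SComplex n) : Prop :=
  IsCMQuot K (SRIdeal K Δ)

/-- Weak vertex-decomposability (over the field `K`). -/
inductive WeaklyVD : SComplex n → Prop
  | singleton (Δ : SComplex n) : Δ.faces = {∅} → WeaklyVD Δ
  | cone (Δ : SComplex n) (k : Fin n) : Δ.Pure → Δ.faces.Nonempty → Δ.IsCone k →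
      WeaklyVD (Δ.del k) → WeaklyVD Δ
  | step (Δ : SComplex n) (k : Fin n) : Δ.Pure → Δ.faces.Nonempty →
      WeaklyVD (Δ.link k) → IsCMComplex K (Δ.del k) →
      (Δ.del k).dimSucc = Δ.dimSucc → WeaklyVD Δ

/-- `Δ` is 2-CM (doubly Cohen–Macaulay) over `K`. -/
def Is2CM (Δ : SComplex n) : Prop :=
  IsCMComplex K Δ ∧ ∀ k : Fin n, {k} ∈ Δ.faces →
    IsCMComplex K (Δ.del k) ∧ (Δ.del k).dimSucc = Δ.dimSucc

end Algebra

/-- An ideal generated by homogeneous polynomials. -/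
def IsHomogeneousIdeal (K : Type*) [Field K] {n : ℕ}
    (I : Ideal (MvPolynomial (Fin n) K)) : Prop :=
  ∃ G : Set (MvPolynomial (Fin n) K),
    (∀ p ∈ G, ∃ d : ℕ, p.IsHomogeneous d) ∧ I = Ideal.span G

/-- the colon computation underlying basic double linkage:
`(xJ + c) : x = J`. -/
theorem basic_double_link_colon (K : Type*) [Field K] {n : ℕ}
    (c J : Ideal (MvPolynomial (Fin n) K)) (x : MvPolynomial (Fin n) K)
    (hchom : IsHomogeneousIdeal K c) (hJhom : IsHomogeneousIdeal K J)
    (hcJ : c ≤ J) (hcCM : IsCMQuot K c) (hJun : UnmixedIdeal K J)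
    (hcod : idealHeight K J = idealHeight K c + 1)
    (hx : x.IsHomogeneous 1)
    (hxc : Ideal.Quotient.mk c x ∈ nonZeroDivisors (MvPolynomial (Fin n) K ⧸ c))
    (hxJ : Ideal.Quotient.mk J x ∈ nonZeroDivisors (MvPolynomial (Fin n) K ⧸ J)) :
    Submodule.colon (Ideal.span {x} * J + c) (Ideal.span {x}) = J := by
  apply le_antisymm
  · intro r hr
    have hrx : r * x ∈ Ideal.span {x} * J + c := by
      have := Submodule.mem_colon.mp hr x (Ideal.mem_span_singleton_self x)
      simpa [smul_eq_mul] using this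
    have hJ' : Ideal.span {x} * J + c ≤ J := by
      apply sup_le _ hcJ
      exact le_trans Ideal.mul_le_right le_rfl
    have hrxJ : r * x ∈ J := hJ' hrx
    have : Ideal.Quotient.mk J r * Ideal.Quotient.mk J x = 0 := by
      rw [← map_mul]
      exact (Ideal.Quotient.eq_zero_iff_mem).mpr hrxJ
    have hr0 : Ideal.Quotient.mk J r = 0 := by
      exact (mem_nonZeroDivisors_iff_right.mp hxJ) _ this
    exact (Ideal.Quotient.eq_zero_iff_mem).mp hr0
  · intro j hj
    rw [Submodule.mem_colon]
    intro p hp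
    obtain ⟨a, rfl⟩ := Ideal.mem_span_singleton.mp hp
    have : j • (x * a) = a * (x * j) := by rw [smul_eq_mul]; ring
    rw [this]
    exact Submodule.mem_sup_left (Ideal.mul_mem_left _ a
      (Ideal.mul_mem_mul (Ideal.mem_span_singleton_self x) hj))
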